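/- If A is an abelian group containing a subgroup isomorphic to ℚ, then there are at least 2^{2^{ℵ₀}} group homomorphisms from ∏_{n ∈ ℕ} ℤ to A. -/

import Mathlib

open Cardinal

namespace Stmt5Aux

open scoped Classical

/-- Encode the length-`n` prefix of `r : ℕ → Bool` as a natural number. -/
noncomputable def code (r : ℕ → Bool) (n : ℕ) : ℕ :=
  Encodable.encode (List.ofFn fun i : Fin n => r i)

lemma code_inj {r r' : ℕ → Bool} {n n' : ℕ} (h : code r n = code r' n') :
    n = n' ∧ ∀ i < n, r i = r' i := by
  have hl : (List.ofFn fun i : Fin n => r i) = (List.ofFn fun i : Fin n' => r' i) :=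
    Encodable.encode_injective h
  have hn : n = n' := by
    have := congrArg List.length hl
    simpa using this
  subst hn
  refine ⟨rfl, fun i hi => ?_⟩
  have := congrArg (fun l : List Bool => l[i]?) hl
  simpa [List.getElem?_ofFn, hi] using this

/-- The family of integer sequences indexed by `ℕ → Bool`. -/
noncomputable def v (r : ℕ → Bool) : ℕ → ℤ :=
  fun m => if ∃ n, code r n = m then 1 else 0

lemma v_self (r : ℕ → Bool) (n : ℕ) : v r (code r n) = 1 := by
  simp [v, show ∃ k, code r k = code r n from ⟨n, rfl⟩]

lemma v_ne (r r' : ℕ → Bool) (k N : ℕ) (hk : r k ≠ r' k) (hkN : k < N) :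
    v r' (code r N) = 0 := by
  have : ¬ ∃ n, code r' n = code r N := by
    rintro ⟨n, hn⟩
    obtain ⟨hnn, hall⟩ := code_inj hn
    exact hk ((hall k (hnn ▸ hkN)).symm)
  simp [v, this]

lemma linindep : LinearIndependent ℤ v := by
  classical
  rw [linearIndependent_iff']
  intro s g hsum r hr
  -- pick, for each r' ≠ r, an index where they differ
  set K : (ℕ → Bool) → ℕ := fun r' =>
    if h : ∃ k, r k ≠ r' k then Nat.find h else 0 with hK
  set N : ℕ := (s.sup K) + 1 with hN
  have hval := congrFun hsum (code r N)
  rw [Finset.sum_apply] at hval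
  have hzero : (0 : ℕ → ℤ) (code r N) = 0 := rfl
  rw [hzero] at hval
  simp only [Pi.smul_apply] at hval
  have : ∑ i ∈ s, g i • v i (code r N) = g r := by
    rw [Finset.sum_eq_single r]
    · rw [v_self]; simp
    · intro r' hr' hne
      have hdiff : ∃ k, r k ≠ r' k := by
        by_contra hc
        push_neg at hc
        exact hne (funext fun k => (hc k).symm)
      have hkN : Nat.find hdiff < N := by
        have h1 : K r' = Nat.find hdiff := by simp [hK, hdiff]
        have h2 : K r' ≤ s.sup K := Finset.le_sup hr'
        omega
      rw [v_ne r r' (Nat.find hdiff) N (Nat.find_spec hdiff) hkN]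
      simp
    · intro h; exact absurd hr h
  rw [this] at hval
  exact hval

noncomputable instance : Module.Injective ℤ ℚ :=
  (Module.Baer.of_divisible ℚ).injective

/-- For each `G : (ℕ → Bool) → ℚ` there is a `ℤ`-linear map `(ℕ → ℤ) →ₗ[ℤ] ℚ`
sending `v r` to `G r`. -/
lemma exists_ext (G : (ℕ → Bool) → ℚ) :
    ∃ h : (ℕ → ℤ) →ₗ[ℤ] ℚ, ∀ r, h (v r) = G r := by
  classical
  set S := Submodule.span ℤ (Set.range v)
  have hv := linindep
  -- linear map on the span
  set ℓ : S →ₗ[ℤ] ℚ := (Finsupp.linearCombination ℤ G).comp hv.repr with hℓ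
  obtain ⟨h, hh⟩ := Module.Injective.extension_property ℤ ℚ S (ℕ → ℤ)
    S.subtype (Submodule.injective_subtype S) ℓ
  refine ⟨h, fun r => ?_⟩
  have hmem : v r ∈ S := Submodule.subset_span ⟨r, rfl⟩
  have := LinearMap.congr_fun hh ⟨v r, hmem⟩
  simp only [LinearMap.comp_apply, Submodule.subtype_apply] at this
  rw [this, hℓ]
  simp only [LinearMap.comp_apply]
  rw [hv.repr_eq_single r ⟨v r, hmem⟩ rfl]
  simp

end Stmt5Aux

open Stmt5Aux in
/-- If an abelian group `A` contains a subgroup isomorphic to `ℚ`, then there are at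
least `2 ^ (2 ^ ℵ₀)` group homomorphisms from `∏_{n ∈ ℕ} ℤ` to `A`. -/
theorem stmt_5 (A : Type) [AddCommGroup A] (h : ∃ f : ℚ →+ A, Function.Injective f) :
    (2 : Cardinal) ^ ((2 : Cardinal) ^ aleph0) ≤ #((ℕ → ℤ) →+ A) := by
  classical
  obtain ⟨f, hf⟩ := h
  choose ext hext using exists_ext
  set Φ : ((ℕ → Bool) → ℚ) → ((ℕ → ℤ) →+ A) :=
    fun G => f.comp (ext G).toAddMonoidHom with hΦ
  have hΦinj : Function.Injective Φ := by
    intro G₁ G₂ hG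
    funext r
    have := DFunLike.congr_fun hG (v r)
    simp only [hΦ, AddMonoidHom.comp_apply, LinearMap.toAddMonoidHom_coe] at this
    rw [hext G₁ r, hext G₂ r] at this
    exact hf this
  calc (2 : Cardinal) ^ ((2 : Cardinal) ^ aleph0)
      ≤ (aleph0 : Cardinal) ^ ((2 : Cardinal) ^ aleph0) := by
        exact power_le_power_right (by exact_mod_cast Cardinal.nat_lt_aleph0 2 |>.le)
    _ = #((ℕ → Bool) → ℚ) := by
        rw [← Cardinal.power_def ℚ (ℕ → Bool), ← Cardinal.power_def Bool ℕ,
          Cardinal.mkRat, Cardinal.mk_bool, Cardinal.mk_nat]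
    _ ≤ #((ℕ → ℤ) →+ A) := Cardinal.mk_le_of_injective hΦinj
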